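/- arXiv:2409.18079 — 2 statements merged into one kernel-verified Lean document; each statement's English description precedes it below -/
import Mathlib

section
/- Let t = (t₁,t₂,t₃) ∈ ℕ³ with positive entries, t̂ = (t₁,t₂), and 𝔥(x,y) a nonzero quasi-homogeneous polynomial of type t̂ and degree r+|t̂|. Then the space 𝒬^t_k of three-dimensional quasi-homogeneous vector fields of type t and degree k decomposes as the direct sum 𝒞_k ⊕ 𝒟_k ⊕ ℱ_k ⊕ 𝒢_k, where 𝒞_k = {(X_g, 0) : g ∈ Δ_{k+|t̂|}, g(0,0,z)=0}, 𝒟_k = {(μD₀, 0) : μ ∈ 𝒫^t_k}, ℱ_k = {(λX_𝔥, 0) : λ ∈ 𝒫^t_{k−r}}, 𝒢_k = {(0,0,f) : f ∈ 𝒫^t_{k+t₃}}. -/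
open MvPolynomial

def IsQH (t : Fin 3 → ℕ) (k : ℕ) (f : MvPolynomial (Fin 3) ℝ) : Prop :=
  ∀ (ε : ℝ) (x : Fin 3 → ℝ),
    eval (fun i => ε ^ t i * x i) f = ε ^ k * eval x f

def IsQHVF (t : Fin 3 → ℕ) (k : ℕ) (F : Fin 3 → MvPolynomial (Fin 3) ℝ) : Prop :=
  ∀ j, IsQH t (k + t j) (F j)

/-- `(X_g, 0)`: the 3D vector field with planar Hamiltonian part `(−∂g/∂y, ∂g/∂x)`
and zero third component. -/
noncomputable def hamVF (g : MvPolynomial (Fin 3) ℝ) : Fin 3 → MvPolynomial (Fin 3) ℝ :=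
  ![-(pderiv 1 g), pderiv 0 g, 0]

/-- `(D₀, 0) = (t₁x, t₂y, 0)`. -/
noncomputable def D0VF (t : Fin 3 → ℕ) : Fin 3 → MvPolynomial (Fin 3) ℝ :=
  ![C ((t 0 : ℝ)) * X 0, C ((t 1 : ℝ)) * X 1, 0]

namespace QH3aux

def wt (t : Fin 3 → ℕ) (d : Fin 3 →₀ ℕ) : ℕ := t 0 * d 0 + t 1 * d 1 + t 2 * d 2
def ew (t : Fin 3 → ℕ) (d : Fin 3 →₀ ℕ) : ℕ := t 0 * d 0 + t 1 * d 1

def SQH (t : Fin 3 → ℕ) (k : ℕ) (f : MvPolynomial (Fin 3) ℝ) : Prop :=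
  ∀ d, coeff d f ≠ 0 → wt t d = k

variable {t : Fin 3 → ℕ}

lemma wt_add (u v : Fin 3 →₀ ℕ) : wt t (u + v) = wt t u + wt t v := by
  simp [wt, Finsupp.add_apply]; ring

lemma wt_single (i : Fin 3) : wt t (Finsupp.single i 1) = t i := by
  fin_cases i <;> simp [wt, Finsupp.single_apply]

lemma wt_eq_sum (d : Fin 3 →₀ ℕ) : wt t d = ∑ i : Fin 3, t i * d i := by
  rw [Fin.sum_univ_three]; rfl

lemma SQH_add {k f g} (hf : SQH t k f) (hg : SQH t k g) : SQH t k (f + g) := by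
  intro d hd
  rw [coeff_add] at hd
  by_cases h : coeff d f = 0
  · exact hg d (by simpa [h] using hd)
  · exact hf d h

lemma SQH_neg {k f} (hf : SQH t k f) : SQH t k (-f) := by
  intro d hd; exact hf d (by simpa using hd)

lemma SQH_sub {k f g} (hf : SQH t k f) (hg : SQH t k g) : SQH t k (f - g) := by
  rw [sub_eq_add_neg]; exact SQH_add hf (SQH_neg hg)

lemma SQH_Cmul {k f} (a : ℝ) (hf : SQH t k f) : SQH t k (C a * f) := by
  intro d hd; rw [coeff_C_mul] at hd
  exact hf d (fun h => hd (by simp [h]))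

lemma SQH_mul {m n f g} (hf : SQH t m f) (hg : SQH t n g) : SQH t (m + n) (f * g) := by
  intro d hd
  rw [coeff_mul] at hd
  obtain ⟨⟨u, v⟩, huv, hne⟩ := Finset.exists_ne_zero_of_sum_ne_zero hd
  rw [Finset.HasAntidiagonal.mem_antidiagonal] at huv
  rcases mul_ne_zero_iff.1 hne with ⟨h1, h2⟩
  rw [← huv, wt_add, hf u h1, hg v h2]

lemma SQH_X (i : Fin 3) : SQH t (t i) (X (R := ℝ) i) := by
  intro d hd
  rw [coeff_X'] at hd
  by_cases h : Finsupp.single i 1 = d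
  · rw [← h, wt_single]
  · simp [h] at hd

lemma SQH_cast {m n : ℕ} {f} (h : m = n) (hf : SQH t m f) : SQH t n f := h ▸ hf

lemma fs_sub_add {u : Fin 3 →₀ ℕ} {i : Fin 3} (h : u i ≠ 0) :
    u - Finsupp.single i 1 + Finsupp.single i 1 = u := by
  ext j
  simp only [Finsupp.add_apply, Finsupp.tsub_apply, Finsupp.single_apply]
  by_cases hj : i = j
  · subst hj; simp only [if_true, eq_self_iff_true]; omega
  · simp [hj]

lemma fs_add_sub (d : Fin 3 →₀ ℕ) (i : Fin 3) :
    d + Finsupp.single i 1 - Finsupp.single i 1 = d := by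
  ext j
  simp only [Finsupp.add_apply, Finsupp.tsub_apply, Finsupp.single_apply]
  by_cases hj : i = j
  · subst hj; simp only [if_true, eq_self_iff_true]; omega
  · simp [hj]

lemma coeff_pderiv (i : Fin 3) (d : Fin 3 →₀ ℕ) (f : MvPolynomial (Fin 3) ℝ) :
    coeff d (pderiv i f) = ((d i : ℝ) + 1) * coeff (d + Finsupp.single i 1) f := by
  induction f using MvPolynomial.induction_on' with
  | add p q hp hq => simp [hp, hq]; ring
  | monomial u a =>
    rw [pderiv_monomial, coeff_monomial, coeff_monomial]
    by_cases h : u = d + Finsupp.single i 1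
    · subst h
      rw [if_pos (fs_add_sub d i), if_pos rfl]
      simp only [Finsupp.add_apply, Finsupp.single_apply, if_pos rfl]
      push_cast; ring
    · rw [if_neg h]
      by_cases h2 : u - Finsupp.single i 1 = d
      · rw [if_pos h2]
        by_cases h3 : u i = 0
        · simp [h3]
        · exact absurd (by rw [← h2, fs_sub_add h3]) (Ne.symm h)
      · simp [h2]

lemma pd_zero_supp {𝔥 : MvPolynomial (Fin 3) ℝ} (h : pderiv 2 𝔥 = 0)
    {d : Fin 3 →₀ ℕ} (hd : coeff d 𝔥 ≠ 0) : d 2 = 0 := by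
  by_contra h2
  set e := d - Finsupp.single 2 1 with he
  have := coeff_pderiv 2 e 𝔥
  rw [h, coeff_zero, he, fs_sub_add h2] at this
  have hne : ((e 2 : ℕ) : ℝ) + 1 ≠ 0 := by positivity
  rcases mul_eq_zero.1 this.symm with h' | h'
  · exact hne h'
  · exact hd h'

noncomputable def Eop (t : Fin 3 → ℕ) (f : MvPolynomial (Fin 3) ℝ) : MvPolynomial (Fin 3) ℝ :=
  C (t 0 : ℝ) * (pderiv 0 f * X 0) + C (t 1 : ℝ) * (pderiv 1 f * X 1)

lemma coeff_pd_mul_X (i : Fin 3) (d : Fin 3 →₀ ℕ) (f : MvPolynomial (Fin 3) ℝ) :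
    coeff d (pderiv i f * X i) = (d i : ℝ) * coeff d f := by
  classical
  rw [coeff_mul_X']
  by_cases h : d i = 0
  · simp [Finsupp.mem_support_iff, h]
  · rw [if_pos (Finsupp.mem_support_iff.2 h), coeff_pderiv, fs_sub_add h]
    set e := d - Finsupp.single i 1 with he
    have h3 : e i + 1 = d i := by
      rw [he, Finsupp.tsub_apply]
      have : Finsupp.single i 1 i = 1 := by simp
      rw [this]; omega
    have h4 : ((e i : ℕ) : ℝ) + 1 = (d i : ℝ) := by exact_mod_cast congrArg (Nat.cast : ℕ → ℝ) h3
    rw [h4]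

lemma coeff_Eop (d : Fin 3 →₀ ℕ) (f : MvPolynomial (Fin 3) ℝ) :
    coeff d (Eop t f) = (ew t d : ℝ) * coeff d f := by
  rw [Eop, coeff_add, coeff_C_mul, coeff_C_mul, coeff_pd_mul_X, coeff_pd_mul_X, ew]
  push_cast
  ring

lemma Eop_add (f g : MvPolynomial (Fin 3) ℝ) : Eop t (f + g) = Eop t f + Eop t g := by
  simp only [Eop, map_add]
  ring

lemma Eop_mul (f g : MvPolynomial (Fin 3) ℝ) :
    Eop t (f * g) = Eop t f * g + f * Eop t g := by
  simp only [Eop, pderiv_mul]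
  ring

lemma SQH_Eop {k f} (hf : SQH t k f) : SQH t k (Eop t f) := by
  intro d hd
  rw [coeff_Eop] at hd
  exact hf d fun h => hd (by simp [h])

lemma euler_h {c : ℕ} {𝔥 : MvPolynomial (Fin 3) ℝ} (h2 : pderiv 2 𝔥 = 0)
    (hs : SQH t c 𝔥) : Eop t 𝔥 = C (c : ℝ) * 𝔥 := by
  apply MvPolynomial.ext
  intro d
  rw [coeff_Eop, coeff_C_mul]
  by_cases h : coeff d 𝔥 = 0
  · simp [h]
  · have hd2 : d 2 = 0 := pd_zero_supp h2 h
    have hwt : wt t d = c := hs d h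
    have : ew t d = c := by rw [← hwt]; simp [ew, wt, hd2]
    rw [this]

lemma SQH_pderiv {m : ℕ} {f} (i : Fin 3) (hf : SQH t (m + t i) f) : SQH t m (pderiv i f) := by
  intro d hd
  rw [coeff_pderiv] at hd
  have h2 : coeff (d + Finsupp.single i 1) f ≠ 0 := fun h => hd (by simp [h])
  have := hf _ h2
  rw [wt_add, wt_single] at this
  omega

noncomputable def dg (φ : (Fin 3 →₀ ℕ) → ℝ) (f : MvPolynomial (Fin 3) ℝ) :
    MvPolynomial (Fin 3) ℝ :=
  ∑ d ∈ f.support, monomial d (φ d * coeff d f)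

lemma coeff_dg (φ : (Fin 3 →₀ ℕ) → ℝ) (f : MvPolynomial (Fin 3) ℝ) (d : Fin 3 →₀ ℕ) :
    coeff d (dg φ f) = φ d * coeff d f := by
  rw [dg, coeff_sum]
  rw [Finset.sum_eq_single d]
  · rw [coeff_monomial, if_pos rfl]
  · intro b _ hb
    rw [coeff_monomial, if_neg hb]
  · intro hd
    rw [MvPolynomial.notMem_support_iff.1 hd, mul_zero, coeff_monomial]
    simp

lemma SQH_dg {k f} (φ : (Fin 3 →₀ ℕ) → ℝ) (hf : SQH t k f) : SQH t k (dg φ f) := by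
  intro d hd
  rw [coeff_dg] at hd
  exact hf d fun h => hd (by simp [h])

noncomputable def shx (f : MvPolynomial (Fin 3) ℝ) : MvPolynomial (Fin 3) ℝ :=
  ∑ d ∈ f.support, monomial (d - Finsupp.single 0 1) (coeff d f)

lemma shx_mul_X {f : MvPolynomial (Fin 3) ℝ}
    (h : ∀ d : Fin 3 →₀ ℕ, d 0 = 0 → coeff d f = 0) : shx f * X 0 = f := by
  classical
  apply MvPolynomial.ext
  intro d
  rw [coeff_mul_X']
  by_cases hd : (0 : Fin 3) ∈ d.support
  · rw [if_pos hd, shx, coeff_sum]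
    have hd0 : d 0 ≠ 0 := Finsupp.mem_support_iff.1 hd
    rw [Finset.sum_eq_single d]
    · rw [coeff_monomial, if_pos rfl]
    · intro b hb hbd
      rw [coeff_monomial, if_neg]
      intro hh
      apply hbd
      have hb0 : b 0 ≠ 0 := fun h0 => MvPolynomial.mem_support_iff.1 hb (h b h0)
      calc b = b - Finsupp.single 0 1 + Finsupp.single 0 1 := (fs_sub_add hb0).symm
        _ = d - Finsupp.single 0 1 + Finsupp.single 0 1 := by rw [hh]
        _ = d := fs_sub_add hd0
    · intro hds
      rw [MvPolynomial.notMem_support_iff.1 hds, coeff_monomial]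
      simp
  · rw [if_neg hd]
    exact (h d (Finsupp.notMem_support_iff.1 hd)).symm

noncomputable def rho : MvPolynomial (Fin 3) ℝ →ₐ[ℝ] MvPolynomial (Fin 3) ℝ :=
  aeval ![0, X 1, X 2]

@[simp] lemma rho_X0 : rho (X 0) = 0 := by simp [rho]
@[simp] lemma rho_X1 : rho (X 1) = X 1 := by simp [rho]
@[simp] lemma rho_C (a : ℝ) : rho (C a) = C a := by simp [rho, algebraMap_eq]

lemma coeff_rho {d : Fin 3 →₀ ℕ} (h0 : d 0 = 0) (f : MvPolynomial (Fin 3) ℝ) :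
    coeff d (rho f) = coeff d f := by
  induction f using MvPolynomial.induction_on' with
  | add p q hp hq => simp [map_add, hp, hq]
  | monomial u a =>
    by_cases hu : u 0 = 0
    · have : rho (monomial u a) = monomial u a := by
        rw [monomial_eq, map_mul, rho_C, map_finsuppProd]
        congr 1
        apply Finsupp.prod_congr
        intro i hi
        rw [map_pow]
        congr 1
        have hi0 : i ≠ 0 := fun h => (Finsupp.mem_support_iff.1 hi) (h ▸ hu)
        fin_cases i
        · exact absurd rfl hi0
        · simp
        · simp [rho]
      rw [this]
    · have hz : rho (monomial u a) = 0 := by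
        rw [monomial_eq, map_mul, map_finsuppProd]
        apply mul_eq_zero_of_right
        rw [Finsupp.prod]
        apply Finset.prod_eq_zero (Finsupp.mem_support_iff.2 hu)
        rw [map_pow, rho_X0, zero_pow hu]
      rw [hz, coeff_zero, coeff_monomial, if_neg]
      exact fun h => hu (h ▸ h0)

noncomputable def pz (g : MvPolynomial (Fin 3) ℝ) : Polynomial ℝ :=
  aeval ![0, 0, Polynomial.X] g

lemma eval_pz (g : MvPolynomial (Fin 3) ℝ) (z : ℝ) :
    Polynomial.eval z (pz g) = eval ![0, 0, z] g := by
  induction g using MvPolynomial.induction_on with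
  | C a => simp [pz, algebraMap_eq]
  | add p q hp hq =>
    rw [show pz (p + q) = pz p + pz q from map_add _ _ _, Polynomial.eval_add, hp, hq,
      map_add]
  | mul_X p i hp =>
    rw [show pz (p * X i) = pz p * aeval ![0, 0, Polynomial.X] (X i) from map_mul _ _ _,
      Polynomial.eval_mul, hp, map_mul, eval_X]
    congr 1
    fin_cases i <;> simp [aeval_X]

lemma single2_eq {d : Fin 3 →₀ ℕ} (h0 : d 0 = 0) (h1 : d 1 = 0) :
    d = Finsupp.single 2 (d 2) := by
  ext j
  fin_cases j <;> simp [Finsupp.single_apply, h0, h1]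

lemma coeff_pz (g : MvPolynomial (Fin 3) ℝ) (n : ℕ) :
    (pz g).coeff n = coeff (Finsupp.single 2 n) g := by
  induction g using MvPolynomial.induction_on' with
  | add p q hp hq =>
    rw [show pz (p + q) = pz p + pz q from map_add _ _ _, Polynomial.coeff_add, hp, hq,
      MvPolynomial.coeff_add]
  | monomial u a =>
    by_cases h01 : u 0 = 0 ∧ u 1 = 0
    · obtain ⟨h0, h1⟩ := h01
      rw [single2_eq h0 h1]
      have : pz (monomial (Finsupp.single 2 (u 2)) a) = Polynomial.C a * Polynomial.X ^ (u 2) := by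
        rw [pz, aeval_monomial]
        rw [Finsupp.prod_single_index (by simp)]
        simp [algebraMap_eq]
      rw [this, Polynomial.coeff_C_mul, Polynomial.coeff_X_pow, coeff_monomial]
      by_cases h : u 2 = n
      · rw [h, if_pos rfl, if_pos rfl, mul_one]
      · rw [if_neg (fun hh : n = u 2 => h hh.symm), if_neg, mul_zero]
        exact fun hh => h (by
          have := congrArg (fun v : Fin 3 →₀ ℕ => v 2) hh
          simpa using this)
    · have hz : pz (monomial u a) = 0 := by
        rw [pz, monomial_eq, map_mul, map_finsuppProd]
        apply mul_eq_zero_of_right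
        rw [Finsupp.prod]
        rcases (not_and_or.1 h01) with h | h
        · apply Finset.prod_eq_zero (Finsupp.mem_support_iff.2 h)
          rw [map_pow, aeval_X]
          simp [zero_pow h]
        · apply Finset.prod_eq_zero (Finsupp.mem_support_iff.2 h)
          rw [map_pow, aeval_X]
          simp [zero_pow h]
      rw [hz, Polynomial.coeff_zero, coeff_monomial, if_neg]
      intro hh
      rcases not_and_or.1 h01 with h | h
      · exact h (by rw [hh]; simp [Finsupp.single_apply])
      · exact h (by rw [hh]; simp [Finsupp.single_apply])

lemma evalz_zero_of_coeff {g : MvPolynomial (Fin 3) ℝ}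
    (h : ∀ d : Fin 3 →₀ ℕ, d 0 = 0 → d 1 = 0 → coeff d g = 0) :
    ∀ z : ℝ, eval ![0, 0, z] g = 0 := by
  intro z
  rw [← eval_pz]
  have : pz g = 0 := by
    apply Polynomial.ext
    intro n
    rw [coeff_pz, Polynomial.coeff_zero]
    exact h _ (by simp [Finsupp.single_apply]) (by simp [Finsupp.single_apply])
  simp [this]

lemma coeff_zero_of_evalz {g : MvPolynomial (Fin 3) ℝ}
    (h : ∀ z : ℝ, eval ![0, 0, z] g = 0) :
    ∀ d : Fin 3 →₀ ℕ, d 0 = 0 → d 1 = 0 → coeff d g = 0 := by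
  intro d h0 h1
  have hp : pz g = 0 := Polynomial.funext (fun z => by rw [eval_pz, h z, Polynomial.eval_zero])
  rw [single2_eq h0 h1, ← coeff_pz, hp, Polynomial.coeff_zero]

noncomputable def scale (t : Fin 3 → ℕ) (f : MvPolynomial (Fin 3) ℝ) : MvPolynomial (Fin 3) ℝ :=
  aeval (fun i => C ((2:ℝ) ^ t i) * X i) f

lemma eval_scale (f : MvPolynomial (Fin 3) ℝ) (x : Fin 3 → ℝ) :
    eval x (scale t f) = eval (fun i => (2:ℝ) ^ t i * x i) f := by
  induction f using MvPolynomial.induction_on with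
  | C a => simp [scale, algebraMap_eq]
  | add p q hp hq =>
    rw [show scale t (p + q) = scale t p + scale t q from map_add _ _ _, map_add, hp, hq, map_add]
  | mul_X p i hp =>
    rw [show scale t (p * X i) = scale t p * aeval _ (X i) from map_mul _ _ _, map_mul, hp,
      aeval_X, map_mul, map_mul, eval_C, eval_X, eval_X]

lemma coeff_scale (f : MvPolynomial (Fin 3) ℝ) (d : Fin 3 →₀ ℕ) :
    coeff d (scale t f) = (2:ℝ) ^ (wt t d) * coeff d f := by
  induction f using MvPolynomial.induction_on' with
  | add p q hp hq =>
    rw [show scale t (p + q) = scale t p + scale t q from map_add _ _ _, coeff_add, hp, hq,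
      coeff_add]
    ring
  | monomial u a =>
    have key : scale t (monomial u a) = monomial u ((2:ℝ) ^ (wt t u) * a) := by
      rw [scale, aeval_monomial, algebraMap_eq]
      have : (Finsupp.prod u fun i n => (C ((2:ℝ) ^ t i) * X i) ^ n)
          = C ((2:ℝ) ^ (wt t u)) * Finsupp.prod u fun i n => (X i : MvPolynomial (Fin 3) ℝ) ^ n := by
        rw [Finsupp.prod, Finsupp.prod]
        have : ∀ i ∈ u.support, (C ((2:ℝ) ^ t i) * X i) ^ u i
            = C (((2:ℝ) ^ (t i * u i))) * (X i : MvPolynomial (Fin 3) ℝ) ^ u i := by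
          intro i _
          rw [mul_pow, ← map_pow, ← pow_mul]
        rw [Finset.prod_congr rfl this, Finset.prod_mul_distrib, ← map_prod,
          Finset.prod_pow_eq_pow_sum]
        have hs : ∑ i ∈ u.support, t i * u i = wt t u := by
          rw [wt_eq_sum]
          apply Finset.sum_subset (Finset.subset_univ _)
          intro i _ hi
          rw [Finsupp.notMem_support_iff.1 hi, mul_zero]
        rw [hs]
      rw [this, ← mul_assoc, mul_comm (C a), mul_assoc, ← monomial_eq, C_mul_monomial]
    rw [key, coeff_monomial, coeff_monomial]
    by_cases h : u = d
    · subst h; simp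
    · simp [h]

lemma SQH_of_isQH {k f} (h : IsQH t k f) : SQH t k f := by
  intro d hd
  have key : scale t f = C ((2:ℝ) ^ k) * f := by
    apply MvPolynomial.funext
    intro x
    rw [eval_scale, map_mul, eval_C]
    exact h 2 x
  have := congrArg (coeff d) key
  rw [coeff_scale, coeff_C_mul] at this
  have h3 : (2:ℝ) ^ (wt t d) = 2 ^ k := mul_right_cancel₀ hd this
  exact (pow_right_strictMono₀ (a := (2:ℝ)) one_lt_two).injective h3

lemma isQH_of_SQH {k f} (h : SQH t k f) : IsQH t k f := by
  intro ε x
  rw [eval_eq', eval_eq', Finset.mul_sum]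
  apply Finset.sum_congr rfl
  intro d hd
  have hwt : wt t d = k := h d (MvPolynomial.mem_support_iff.1 hd)
  have : (∏ i : Fin 3, (ε ^ t i * x i) ^ d i)
      = ε ^ (wt t d) * ∏ i : Fin 3, (x i) ^ d i := by
    rw [Finset.prod_congr rfl (fun i _ => mul_pow (ε ^ t i) (x i) (d i)),
      Finset.prod_mul_distrib]
    congr 1
    rw [Finset.prod_congr rfl (fun i (_ : i ∈ Finset.univ) => (pow_mul ε (t i) (d i)).symm),
      Finset.prod_pow_eq_pow_sum, wt_eq_sum]
  rw [this, hwt]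
  ring

lemma X_ne_zero' (i : Fin 3) : (X i : MvPolynomial (Fin 3) ℝ) ≠ 0 := by
  intro h
  have := congrArg (coeff (Finsupp.single i 1)) h
  rw [coeff_X, coeff_zero] at this
  exact one_ne_zero (α := ℝ) (by simpa using this)

lemma C_ne_zero' {a : ℝ} (ha : a ≠ 0) : (C a : MvPolynomial (Fin 3) ℝ) ≠ 0 := by
  intro h
  exact ha (by simpa using congrArg (coeff 0) h)

lemma cancel_CX {a : ℝ} (ha : a ≠ 0) (i : Fin 3) {u v : MvPolynomial (Fin 3) ℝ}
    (h : C a * (u * X i) = C a * (v * X i)) : u = v := by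
  have h2 : u * X i = v * X i := mul_left_cancel₀ (C_ne_zero' ha) h
  exact mul_right_cancel₀ (X_ne_zero' i) h2

end QH3aux

open QH3aux

/-- The three-dimensional splitting `𝒬^t_k = 𝒞_k ⊕ 𝒟_k ⊕ ℱ_k ⊕ 𝒢_k`: every
3D quasi-homogeneous vector field of degree `k` decomposes uniquely as
`(X_g,0) + (μD₀,0) + (λX_𝔥,0) + (0,0,f)` with `g ∈ Δ`, `g(0,0,z) = 0`,
`μ ∈ 𝒫^t_k`, `λ ∈ 𝒫^t_{k−r}`, `f ∈ 𝒫^t_{k+t₃}`. -/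
theorem threeDim_splitting (t : Fin 3 → ℕ) (ht : ∀ i, 0 < t i) (r k : ℕ) (hrk : r ≤ k)
    (𝔥 : MvPolynomial (Fin 3) ℝ) (h𝔥z : pderiv 2 𝔥 = 0)
    (h𝔥 : IsQH t (r + t 0 + t 1) 𝔥) (h𝔥0 : 𝔥 ≠ 0)
    (Δ : Submodule ℝ (MvPolynomial (Fin 3) ℝ))
    (hΔQH : ∀ g ∈ Δ, IsQH t (k + t 0 + t 1) g)
    (hΔcompl : ∀ p : MvPolynomial (Fin 3) ℝ, IsQH t (k + t 0 + t 1) p →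
      ∃! gl : MvPolynomial (Fin 3) ℝ × MvPolynomial (Fin 3) ℝ,
        gl.1 ∈ Δ ∧ IsQH t (k - r) gl.2 ∧ p = gl.1 + gl.2 * 𝔥)
    (P : Fin 3 → MvPolynomial (Fin 3) ℝ) (hP : IsQHVF t k P) :
    ∃! c : MvPolynomial (Fin 3) ℝ × MvPolynomial (Fin 3) ℝ ×
           MvPolynomial (Fin 3) ℝ × MvPolynomial (Fin 3) ℝ,
      c.1 ∈ Δ ∧ (∀ z : ℝ, eval ![0, 0, z] c.1 = 0) ∧
      IsQH t k c.2.1 ∧ IsQH t (k - r) c.2.2.1 ∧ IsQH t (k + t 2) c.2.2.2 ∧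
      ∀ j, P j = hamVF c.1 j + c.2.1 * D0VF t j
          + c.2.2.1 * hamVF 𝔥 j + ![0, 0, c.2.2.2] j := by
  classical
  have ht0 := ht 0
  have ht1 := ht 1
  set c : ℕ := r + t 0 + t 1 with hcdef
  have hc0 : 0 < c := by omega
  have hcR : ((c : ℕ) : ℝ) ≠ 0 := Nat.cast_ne_zero.2 hc0.ne'
  have ht0R : ((t 0 : ℕ) : ℝ) ≠ 0 := Nat.cast_ne_zero.2 ht0.ne'
  have ht1R : ((t 1 : ℕ) : ℝ) ≠ 0 := Nat.cast_ne_zero.2 ht1.ne'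
  have h𝔥S : SQH t c 𝔥 := SQH_of_isQH h𝔥
  have h𝔥E : Eop t 𝔥 = C (c : ℝ) * 𝔥 := euler_h h𝔥z h𝔥S
  have h𝔥E' : C (t 0:ℝ) * (pderiv 0 𝔥 * X 0) + C (t 1:ℝ) * (pderiv 1 𝔥 * X 1)
      = C (c : ℝ) * 𝔥 := by rw [← h𝔥E]; rfl
  have h𝔥v : ∀ v : Fin 3 →₀ ℕ, v 0 = 0 → v 1 = 0 → coeff v 𝔥 = 0 := by
    intro v h0 h1
    by_contra hne
    have hv2 := pd_zero_supp h𝔥z hne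
    have hwt := h𝔥S v hne
    rw [wt, h0, h1, hv2] at hwt
    simp at hwt
    omega
  have hmulv : ∀ (f : MvPolynomial (Fin 3) ℝ) (d : Fin 3 →₀ ℕ), d 0 = 0 → d 1 = 0 →
      coeff d (f * 𝔥) = 0 := by
    intro f d h0 h1
    rw [coeff_mul]
    apply Finset.sum_eq_zero
    rintro ⟨u, v⟩ huv
    rw [Finset.HasAntidiagonal.mem_antidiagonal] at huv
    have hv0 : v 0 = 0 := by
      have := congrArg (fun w : Fin 3 →₀ ℕ => w 0) huv
      simp only [Finsupp.add_apply] at this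
      omega
    have hv1 : v 1 = 0 := by
      have := congrArg (fun w : Fin 3 →₀ ℕ => w 1) huv
      simp only [Finsupp.add_apply] at this
      omega
    rw [h𝔥v v hv0 hv1, mul_zero]
  have hew0 : ∀ d : Fin 3 →₀ ℕ, ew t d = 0 → d 0 = 0 ∧ d 1 = 0 := by
    intro d h
    rw [ew] at h
    constructor
    · rcases Nat.mul_eq_zero.1 (by omega : t 0 * d 0 = 0) with h' | h'
      · omega
      · exact h'
    · rcases Nat.mul_eq_zero.1 (by omega : t 1 * d 1 = 0) with h' | h'
      · omega
      · exact h'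
  have hP0S : SQH t (k + t 0) (P 0) := SQH_of_isQH (hP 0)
  have hP1S : SQH t (k + t 1) (P 1) := SQH_of_isQH (hP 1)
  set W : MvPolynomial (Fin 3) ℝ := C (t 0:ℝ) * (P 1 * X 0) - C (t 1:ℝ) * (P 0 * X 1)
    with hWdef
  have hWS : SQH t (k + t 0 + t 1) W := by
    rw [hWdef]
    apply SQH_sub
    · exact SQH_Cmul _ (SQH_cast (by omega) (SQH_mul hP1S (SQH_X 0)))
    · exact SQH_Cmul _ (SQH_cast (by omega) (SQH_mul hP0S (SQH_X 1)))
  have hWv : ∀ d : Fin 3 →₀ ℕ, d 0 = 0 → d 1 = 0 → coeff d W = 0 := by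
    intro d h0 h1
    rw [hWdef, coeff_sub, coeff_C_mul, coeff_C_mul, coeff_mul_X', coeff_mul_X',
      if_neg (by simp [Finsupp.mem_support_iff, h0]),
      if_neg (by simp [Finsupp.mem_support_iff, h1])]
    simp
  set G : MvPolynomial (Fin 3) ℝ := dg (fun d => ((ew t d : ℕ) : ℝ)⁻¹) W with hGdef
  have hGc : ∀ d, coeff d G = ((ew t d : ℕ) : ℝ)⁻¹ * coeff d W := fun d => coeff_dg _ _ d
  have hGv : ∀ d : Fin 3 →₀ ℕ, d 0 = 0 → d 1 = 0 → coeff d G = 0 := by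
    intro d h0 h1; rw [hGc, hWv d h0 h1, mul_zero]
  have hGS : SQH t (k + t 0 + t 1) G := SQH_dg _ hWS
  have hEG : Eop t G = W := by
    apply MvPolynomial.ext
    intro d
    rw [coeff_Eop, hGc]
    by_cases h : ew t d = 0
    · obtain ⟨h0, h1⟩ := hew0 d h
      rw [hWv d h0 h1, h]
      simp
    · have hne : ((ew t d : ℕ) : ℝ) ≠ 0 := Nat.cast_ne_zero.2 h
      field_simp
  have hEG' : C (t 0:ℝ) * (pderiv 0 G * X 0) + C (t 1:ℝ) * (pderiv 1 G * X 1) = W := by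
    rw [← hEG]; rfl
  set A : MvPolynomial (Fin 3) ℝ := P 0 + pderiv 1 G with hAdef
  have hrhoA : rho A = 0 := by
    have h1 : rho (Eop t G) = C (t 1:ℝ) * (rho (pderiv 1 G) * X 1) := by
      rw [Eop, map_add, map_mul, map_mul, map_mul, map_mul, rho_X0, rho_X1, rho_C, rho_C]
      ring
    have h2 : rho W = C (t 1:ℝ) * ((-(rho (P 0))) * X 1) := by
      rw [hWdef, map_sub, map_mul, map_mul, map_mul, map_mul, rho_X0, rho_X1, rho_C, rho_C]
      ring
    have h3 : rho (pderiv 1 G) = -(rho (P 0)) :=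
      cancel_CX ht1R 1 (by rw [← h1, ← h2, hEG])
    rw [hAdef, map_add, h3]
    ring
  have hAv : ∀ d : Fin 3 →₀ ℕ, d 0 = 0 → coeff d A = 0 := by
    intro d h0
    rw [← coeff_rho h0, hrhoA, coeff_zero]
  have hshxA : shx A * X 0 = A := shx_mul_X hAv
  set μ : MvPolynomial (Fin 3) ℝ := C ((t 0:ℝ))⁻¹ * shx A with hμdef
  have hμX : C (t 0:ℝ) * (μ * X 0) = A := by
    rw [hμdef, show C (t 0:ℝ) * (C ((t 0:ℝ))⁻¹ * shx A * X 0)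
        = (C (t 0:ℝ) * C ((t 0:ℝ))⁻¹) * (shx A * X 0) by ring,
      ← map_mul, mul_inv_cancel₀ ht0R, map_one, one_mul, hshxA]
  have heq0 : P 0 = -pderiv 1 G + C (t 0:ℝ) * (μ * X 0) := by
    rw [hμX, hAdef]; ring
  have heq1 : P 1 = pderiv 0 G + C (t 1:ℝ) * (μ * X 1) := by
    have hA' : P 0 + pderiv 1 G = C (t 0:ℝ) * (μ * X 0) := by rw [hμX, hAdef]
    have key : C (t 0:ℝ) * ((P 1) * X 0)
        = C (t 0:ℝ) * ((pderiv 0 G + C (t 1:ℝ) * (μ * X 1)) * X 0) := by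
      linear_combination -hEG' + C (t 1:ℝ) * X 1 * hA'
    exact cancel_CX ht0R 0 key
  obtain ⟨⟨g, q⟩, ⟨hgΔ, hqQH, hGgq⟩, huniq⟩ := hΔcompl G (isQH_of_SQH hGS)
  have hqS : SQH t (k - r) q := SQH_of_isQH hqQH
  set lam : MvPolynomial (Fin 3) ℝ := q + C ((c:ℝ))⁻¹ * Eop t q with hlamdef
  have hlamS : SQH t (k - r) lam := by
    rw [hlamdef]; exact SQH_add hqS (SQH_Cmul _ (SQH_Eop hqS))
  have hclam : C (c:ℝ) * (lam - q) = Eop t q := by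
    rw [hlamdef, show q + C ((c:ℝ))⁻¹ * Eop t q - q = C ((c:ℝ))⁻¹ * Eop t q by ring,
      ← mul_assoc, ← map_mul, mul_inv_cancel₀ hcR, map_one, one_mul]
  set A' : MvPolynomial (Fin 3) ℝ := -pderiv 1 (q * 𝔥) + lam * pderiv 1 𝔥 with hA'def
  set B' : MvPolynomial (Fin 3) ℝ := -pderiv 0 (q * 𝔥) + lam * pderiv 0 𝔥 with hB'def
  have hid2 : C (t 1:ℝ) * (A' * X 1) + C (t 0:ℝ) * (B' * X 0) = 0 := by
    have e1 : C (t 1:ℝ) * (A' * X 1) + C (t 0:ℝ) * (B' * X 0)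
        = -(Eop t (q * 𝔥)) + lam * Eop t 𝔥 := by
      rw [hA'def, hB'def, show Eop t (q * 𝔥) = C (t 0:ℝ) * (pderiv 0 (q * 𝔥) * X 0)
        + C (t 1:ℝ) * (pderiv 1 (q * 𝔥) * X 1) from rfl,
        show Eop t 𝔥 = C (t 0:ℝ) * (pderiv 0 𝔥 * X 0)
        + C (t 1:ℝ) * (pderiv 1 𝔥 * X 1) from rfl]
      ring
    rw [e1, Eop_mul, h𝔥E, ← hclam]
    ring
  have hrhoA' : rho A' = 0 := by
    have h4 := congrArg rho hid2
    rw [map_add, map_mul, map_mul, map_mul, map_mul, rho_X0, rho_X1, rho_C, rho_C,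
      map_zero, mul_zero, mul_zero, add_zero] at h4
    have h5 : C (t 1:ℝ) * (rho A' * X 1) = C (t 1:ℝ) * (0 * X 1) := by
      rw [h4, zero_mul, mul_zero]
    exact cancel_CX ht1R 1 h5
  have hA'v : ∀ d : Fin 3 →₀ ℕ, d 0 = 0 → coeff d A' = 0 := by
    intro d h0
    rw [← coeff_rho h0, hrhoA', coeff_zero]
  have hshxA' : shx A' * X 0 = A' := shx_mul_X hA'v
  set ν : MvPolynomial (Fin 3) ℝ := C ((t 0:ℝ))⁻¹ * shx A' with hνdef
  have hνX : C (t 0:ℝ) * (ν * X 0) = A' := by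
    rw [hνdef, show C (t 0:ℝ) * (C ((t 0:ℝ))⁻¹ * shx A' * X 0)
        = (C (t 0:ℝ) * C ((t 0:ℝ))⁻¹) * (shx A' * X 0) by ring,
      ← map_mul, mul_inv_cancel₀ ht0R, map_one, one_mul, hshxA']
  have hB'eq : B' = -(C (t 1:ℝ)) * (ν * X 1) := by
    have key : C (t 0:ℝ) * (B' * X 0)
        = C (t 0:ℝ) * ((-(C (t 1:ℝ)) * (ν * X 1)) * X 0) := by
      linear_combination hid2 + C (t 1:ℝ) * X 1 * hνX
    exact cancel_CX ht0R 0 key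
  have hpd0G : pderiv 0 G = pderiv 0 g + pderiv 0 (q * 𝔥) := by rw [hGgq, map_add]
  have hpd1G : pderiv 1 G = pderiv 1 g + pderiv 1 (q * 𝔥) := by rw [hGgq, map_add]
  have hfin0 : P 0 = -(pderiv 1 g) + (μ + ν) * (C (t 0:ℝ) * X 0)
      + lam * (-(pderiv 1 𝔥)) + 0 := by
    linear_combination heq0 - hνX - hpd1G
  have hfin1 : P 1 = pderiv 0 g + (μ + ν) * (C (t 1:ℝ) * X 1)
      + lam * pderiv 0 𝔥 + 0 := by
    linear_combination heq1 + hpd0G - hB'eq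
  -- SQH facts for μ + ν
  have hAS : SQH t (k + t 0) A := by
    rw [hAdef]
    exact SQH_add hP0S (SQH_pderiv 1 hGS)
  have hq𝔥S : SQH t ((k + t 0) + t 1) (q * 𝔥) := SQH_cast (by omega) (SQH_mul hqS h𝔥S)
  have hA'S : SQH t (k + t 0) A' := by
    rw [hA'def]
    apply SQH_add (SQH_neg (SQH_pderiv 1 hq𝔥S))
    exact SQH_cast (by omega) (SQH_mul hlamS (SQH_pderiv 1 h𝔥S))
  have hshxAS : SQH t k (shx A) := by
    intro d hd
    have h2 : coeff (d + Finsupp.single 0 1) A ≠ 0 := by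
      rw [← hshxA, coeff_mul_X]
      exact hd
    have h3 := hAS _ h2
    rw [wt_add, wt_single] at h3
    omega
  have hshxA'S : SQH t k (shx A') := by
    intro d hd
    have h2 : coeff (d + Finsupp.single 0 1) A' ≠ 0 := by
      rw [← hshxA', coeff_mul_X]
      exact hd
    have h3 := hA'S _ h2
    rw [wt_add, wt_single] at h3
    omega
  have hμνS : SQH t k (μ + ν) := by
    rw [hμdef, hνdef]
    exact SQH_add (SQH_Cmul _ hshxAS) (SQH_Cmul _ hshxA'S)
  have hgz : ∀ z : ℝ, eval ![0, 0, z] g = 0 := by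
    intro z
    have hG0 : eval ![0, 0, z] G = 0 := evalz_zero_of_coeff hGv z
    have hh0 : eval ![0, 0, z] 𝔥 = 0 := evalz_zero_of_coeff h𝔥v z
    have h6 := congrArg (eval ![0, 0, z]) hGgq
    rw [map_add, map_mul, hG0, hh0, mul_zero, add_zero] at h6
    exact h6.symm
  refine ⟨(g, μ + ν, lam, P 2), ⟨hgΔ, hgz, isQH_of_SQH hμνS, isQH_of_SQH hlamS, hP 2, ?_⟩, ?_⟩
  · intro j
    fin_cases j
    · show P 0 = hamVF g 0 + (μ + ν) * D0VF t 0 + lam * hamVF 𝔥 0 + ![0, 0, P 2] 0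
      simp only [hamVF, D0VF, Matrix.cons_val_zero]
      linear_combination hfin0
    · show P 1 = hamVF g 1 + (μ + ν) * D0VF t 1 + lam * hamVF 𝔥 1 + ![0, 0, P 2] 1
      simp only [hamVF, D0VF, Matrix.cons_val_one, Matrix.head_cons, Matrix.cons_val_zero]
      linear_combination hfin1
    · show P 2 = hamVF g 2 + (μ + ν) * D0VF t 2 + lam * hamVF 𝔥 2 + ![0, 0, P 2] 2
      simp [hamVF, D0VF]
  · rintro ⟨g', μ2, lam2, f2⟩ ⟨hy1, hy2, hy3, hy4, hy5, hy6⟩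
    have e0 := hy6 0
    have e1 := hy6 1
    have e2 := hy6 2
    simp only [hamVF, D0VF, Matrix.cons_val_zero, Matrix.cons_val_one, Matrix.head_cons,
      Matrix.cons_val_two, Matrix.tail_cons] at e0 e1 e2
    have hlam2S : SQH t (k - r) lam2 := SQH_of_isQH hy4
    have hg'v := coeff_zero_of_evalz hy2
    have hWedge : W = Eop t g' + C (c:ℝ) * (lam2 * 𝔥) := by
      rw [hWdef, show Eop t g' = C (t 0:ℝ) * (pderiv 0 g' * X 0)
        + C (t 1:ℝ) * (pderiv 1 g' * X 1) from rfl]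
      linear_combination C (t 0:ℝ) * X 0 * e1 - C (t 1:ℝ) * X 1 * e0 + lam2 * h𝔥E'
    have hcpos : (0:ℝ) < (c : ℕ) := by exact_mod_cast hc0
    have hewc : ∀ d : Fin 3 →₀ ℕ, ((ew t d : ℕ) : ℝ) + (c:ℝ) ≠ 0 := by
      intro d
      positivity
    set qh : MvPolynomial (Fin 3) ℝ :=
      dg (fun d => (c : ℝ) / (((ew t d : ℕ) : ℝ) + (c:ℝ))) lam2 with hqhdef
    have hqhc : ∀ d, coeff d qh = (c : ℝ) / (((ew t d : ℕ) : ℝ) + (c:ℝ)) * coeff d lam2 :=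
      fun d => coeff_dg _ _ d
    have hqhrel : Eop t qh + C (c:ℝ) * qh = C (c:ℝ) * lam2 := by
      apply MvPolynomial.ext
      intro d
      rw [coeff_add, coeff_Eop, coeff_C_mul, coeff_C_mul, hqhc]
      field_simp
    have hq𝔥v2 : ∀ d : Fin 3 →₀ ℕ, d 0 = 0 → d 1 = 0 → coeff d (qh * 𝔥) = 0 :=
      fun d h0 h1 => hmulv qh d h0 h1
    have hEeq : Eop t (g' + qh * 𝔥) = Eop t G := by
      rw [Eop_add, Eop_mul, h𝔥E, hEG, hWedge]
      linear_combination 𝔥 * hqhrel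
    have hEinj : g' + qh * 𝔥 = G := by
      apply MvPolynomial.ext
      intro d
      have h7 := congrArg (coeff d) hEeq
      rw [coeff_Eop, coeff_Eop] at h7
      by_cases h : ew t d = 0
      · obtain ⟨h0, h1⟩ := hew0 d h
        rw [coeff_add, hg'v d h0 h1, hq𝔥v2 d h0 h1, hGv d h0 h1, add_zero]
      · exact mul_left_cancel₀ (Nat.cast_ne_zero.2 h) h7
    have hqhS : SQH t (k - r) qh := SQH_dg _ hlam2S
    have hpair : ((g', qh) : _ × _) = (g, q) :=
      huniq (g', qh) ⟨hy1, isQH_of_SQH hqhS, hEinj.symm⟩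
    have hg'eq : g' = g := congrArg Prod.fst hpair
    have hqheq : qh = q := congrArg Prod.snd hpair
    have hlameq : lam2 = lam := by
      apply MvPolynomial.ext
      intro d
      have h8 : coeff d qh = coeff d q := by rw [hqheq]
      rw [hqhc] at h8
      rw [hlamdef, coeff_add, coeff_C_mul, coeff_Eop, ← h8]
      field_simp
      ring
    have hμ2 : μ2 = μ + ν := by
      have e0' := e0
      rw [hg'eq, hlameq] at e0'
      have h9 : C (t 0:ℝ) * (μ2 * X 0) = C (t 0:ℝ) * ((μ + ν) * X 0) := by
        linear_combination hfin0 - e0'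
      exact cancel_CX ht0R 0 h9
    have hf2 : f2 = P 2 := by linear_combination -e2
    rw [Prod.mk.injEq, Prod.mk.injEq, Prod.mk.injEq]
    exact ⟨hg'eq, hμ2, hlameq, hf2⟩
end

section
/- Let F_r = (X_𝔥, 𝔣) be the principal part with 𝔥 = 𝔥(x,y) and 𝔣 = 𝔣(x,y). For μ ∈ 𝒫^t_k, the Lie bracket satisfies [(μD₀, 0), F_r] = ((∇μ·F_r)·D₀, 0) − (r·μ·X_𝔥, 0) − (0, (r+t₃)·μ·𝔣), where D₀ = (t₁x, t₂y). -/
open MvPolynomial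

/-- Lie bracket `[P,F] = DP·F − DF·P` of 3D polynomial vector fields. -/
noncomputable def lieBr (P F : Fin 3 → MvPolynomial (Fin 3) ℝ) :
    Fin 3 → MvPolynomial (Fin 3) ℝ :=
  fun j => (∑ i, pderiv i (P j) * F i) - (∑ i, pderiv i (F j) * P i)

/-- The principal part `F_r = (X_𝔥, 𝔣) = (−∂𝔥/∂y, ∂𝔥/∂x, 𝔣)`. -/
noncomputable def Fr (𝔥 𝔣 : MvPolynomial (Fin 3) ℝ) : Fin 3 → MvPolynomial (Fin 3) ℝ :=
  ![-(pderiv 1 𝔥), pderiv 0 𝔥, 𝔣]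

/-! ### Auxiliary lemmas -/

lemma aeval_scale (t : Fin 3 → ℕ) (ε : ℝ) (m : Fin 3 →₀ ℕ) (c : ℝ) :
    aeval (fun i => C (ε ^ t i) * X i) (monomial m c) =
      C (ε ^ (∑ i, t i * m i)) * monomial m c := by
  rw [aeval_monomial, monomial_eq]
  rw [Finsupp.prod_fintype _ _ (by simp), Finsupp.prod_fintype _ _ (by simp)]
  simp only [mul_pow, ← C_pow, ← pow_mul]
  rw [Finset.prod_mul_distrib, ← map_prod, Finset.prod_pow_eq_pow_sum]
  push_cast [algebraMap_eq]
  ring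

lemma isQH_support {t : Fin 3 → ℕ} {k : ℕ} {f : MvPolynomial (Fin 3) ℝ}
    (hf : IsQH t k f) : ∀ m ∈ f.support, (∑ i, t i * m i) = k := by
  intro m hm
  have key : ∀ ε : ℝ, aeval (fun i => C (ε ^ t i) * X i) f = C (ε ^ k) * f := by
    intro ε
    apply MvPolynomial.funext
    intro x
    have h1 : eval x (aeval (fun i => C (ε ^ t i) * X i) f)
        = eval (fun i => ε ^ t i * x i) f := by
      rw [aeval_eq_bind₁, eval, eval₂Hom_bind₁]
      simp only [eval₂Hom_C, eval₂Hom_X', map_mul, RingHom.id_apply]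
      rfl
    rw [h1, hf ε x]
    simp
  have hc : ∀ ε : ℝ, ε ^ (∑ i, t i * m i) * coeff m f = ε ^ k * coeff m f := by
    intro ε
    have h2 := congrArg (coeff m) (key ε)
    rw [coeff_C_mul] at h2
    rw [← h2]
    calc ε ^ (∑ i, t i * m i) * coeff m f
        = ∑ m' ∈ f.support, coeff m (C (ε ^ (∑ i, t i * m' i)) * monomial m' (coeff m' f)) := by
          rw [Finset.sum_eq_single m]
          · rw [coeff_C_mul, coeff_monomial]; simp
          · intro b _ hb; rw [coeff_C_mul, coeff_monomial]; simp [hb]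
          · intro h; simp [MvPolynomial.notMem_support_iff.mp h]
      _ = coeff m (aeval (fun i => C (ε ^ t i) * X i) f) := by
          conv_rhs => rw [f.as_sum]
          rw [map_sum, coeff_sum]
          exact (Finset.sum_congr rfl fun m' _ => by rw [aeval_scale]).symm
  have h2 := hc 2
  have hcm : coeff m f ≠ 0 := MvPolynomial.mem_support_iff.mp hm
  have h3 : (2:ℝ) ^ (∑ i, t i * m i) = 2 ^ k := by
    exact mul_right_cancel₀ hcm h2
  have h4 : (2:ℕ) ^ (∑ i, t i * m i) = 2 ^ k := by exact_mod_cast h3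
  exact Nat.pow_right_injective le_rfl h4

lemma X_mul_pderiv_monomial (i : Fin 3) (m : Fin 3 →₀ ℕ) (c : ℝ) :
    X i * pderiv i (monomial m c) = monomial m (c * (m i : ℝ)) := by
  rw [pderiv_monomial]
  by_cases h : m i = 0
  · simp [h]
  · rw [X, monomial_mul, one_mul]
    rw [add_comm, tsub_add_cancel_of_le (Finsupp.single_le_iff.mpr (Nat.one_le_iff_ne_zero.mpr h))]

lemma euler {t : Fin 3 → ℕ} {k : ℕ} {f : MvPolynomial (Fin 3) ℝ}
    (hs : ∀ m ∈ f.support, (∑ i, t i * m i) = k) :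
    ∑ i, C ((t i : ℝ)) * X i * pderiv i f = C ((k : ℝ)) * f := by
  conv_lhs => rw [f.as_sum]
  conv_rhs => rw [f.as_sum]
  rw [Finset.mul_sum]
  simp only [map_sum, Finset.mul_sum]
  rw [Finset.sum_comm]
  refine Finset.sum_congr rfl fun m hm => ?_
  have hk := hs m hm
  calc ∑ i, C ((t i : ℝ)) * X i * pderiv i (monomial m (coeff m f))
      = ∑ i, monomial m ((t i : ℝ) * (coeff m f * (m i : ℝ))) := by
        refine Finset.sum_congr rfl fun i _ => ?_
        rw [mul_assoc, X_mul_pderiv_monomial, C_mul_monomial]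
    _ = monomial m (∑ i, (t i : ℝ) * (coeff m f * (m i : ℝ))) := by rw [← map_sum]
    _ = C ((k : ℝ)) * monomial m (coeff m f) := by
        rw [C_mul_monomial]
        congr 1
        rw [← hk]
        push_cast
        rw [Finset.sum_mul]
        refine (Finset.sum_congr rfl fun i _ => ?_)
        ring

lemma pderiv_comm' (i j : Fin 3) (f : MvPolynomial (Fin 3) ℝ) :
    pderiv i (pderiv j f) = pderiv j (pderiv i f) := by
  induction f using MvPolynomial.induction_on' with
  | monomial m c =>
    simp only [pderiv_monomial]
    by_cases hij : i = j
    · subst hij; rfl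
    · have h1 : ((m - Finsupp.single j 1 : Fin 3 →₀ ℕ)) i = m i := by
        simp [Finsupp.tsub_apply, Finsupp.single_apply, Ne.symm hij]
      have h2 : ((m - Finsupp.single i 1 : Fin 3 →₀ ℕ)) j = m j := by
        simp [Finsupp.tsub_apply, Finsupp.single_apply, hij]
      rw [h1, h2, tsub_right_comm]
      ring_nf
  | add p q hp hq => simp [hp, hq]

/-- `[(μD₀,0), F_r] = ((∇μ·F_r)D₀, 0) − (rμX_𝔥, 0) − (0, (r+t₃)μ𝔣)`. -/
theorem lieBracket_dissipative_Fr (t : Fin 3 → ℕ) (ht : ∀ i, 0 < t i) (r k : ℕ)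
    (𝔥 𝔣 : MvPolynomial (Fin 3) ℝ) (h𝔥z : pderiv 2 𝔥 = 0) (h𝔣z : pderiv 2 𝔣 = 0)
    (h𝔥 : IsQH t (r + t 0 + t 1) 𝔥) (h𝔣 : IsQH t (r + t 2) 𝔣)
    (μ : MvPolynomial (Fin 3) ℝ) (hμ : IsQH t k μ) :
    ∀ j, lieBr (fun i => μ * D0VF t i) (Fr 𝔥 𝔣) j =
      (∑ i, pderiv i μ * Fr 𝔥 𝔣 i) * D0VF t j
      - C ((r : ℝ)) * (μ * hamVF 𝔥 j)
      - ![0, 0, C (((r + t 2 : ℕ) : ℝ)) * (μ * 𝔣)] j := by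
  have Eh := euler (isQH_support h𝔥)
  have Ef := euler (isQH_support h𝔣)
  rw [Fin.sum_univ_three] at Eh Ef
  rw [h𝔥z] at Eh
  rw [h𝔣z] at Ef
  rw [mul_zero, add_zero] at Eh Ef
  -- Euler identities for the partial derivatives of 𝔥
  have Ehx := congrArg (pderiv 0) Eh
  have Ehy := congrArg (pderiv 1) Eh
  simp only [pderiv_C_mul, map_add, pderiv_mul, pderiv_X_self,
    pderiv_X_of_ne (show (1:Fin 3) ≠ 0 by decide),
    pderiv_X_of_ne (show (0:Fin 3) ≠ 1 by decide), pderiv_C,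
    zero_mul, one_mul, mul_zero, add_zero, zero_add] at Ehx Ehy
  intro j
  fin_cases j <;>
    simp only [lieBr, Fr, D0VF, hamVF, Fin.sum_univ_three, Fin.isValue,
      Matrix.cons_val_zero, Matrix.cons_val_one, Matrix.head_cons,
      Matrix.cons_val_two, Matrix.tail_cons, pderiv_mul, pderiv_C_mul,
      pderiv_X_self, pderiv_X_of_ne (show (1:Fin 3) ≠ 0 by decide),
      pderiv_X_of_ne (show (0:Fin 3) ≠ 1 by decide),
      pderiv_X_of_ne (show (0:Fin 3) ≠ 2 by decide),
      pderiv_X_of_ne (show (1:Fin 3) ≠ 2 by decide),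
      pderiv_X_of_ne (show (2:Fin 3) ≠ 0 by decide),
      pderiv_X_of_ne (show (2:Fin 3) ≠ 1 by decide),
      Fin.zero_eta, Fin.mk_one, Fin.reduceFinMk, pderiv_C,
      mul_zero, zero_mul, mul_one, one_mul, add_zero, zero_add, mul_neg, neg_mul, map_neg,
      map_zero, h𝔥z, h𝔣z]
  · simp only [Nat.cast_add, map_add] at Ehy ⊢
    linear_combination μ * Ehy + μ * (C ((t 0 : ℝ)) * X 0) * pderiv_comm' 0 1 𝔥
  · simp only [Nat.cast_add, map_add] at Ehx ⊢
    linear_combination (-μ) * Ehx - μ * (C ((t 1 : ℝ)) * X 1) * pderiv_comm' 1 0 𝔥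
  · simp only [Nat.cast_add, map_add] at Ef ⊢
    linear_combination (-μ) * Ef
end
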